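/- Let V: [0,1] → M₂(ℝ) be integrable with V = Vᵀ and tr V = 0, and let N solve N' = VN with N(0) = I. Set H = NᵀN. Let U₊ and U₋ be the solutions of ∂ₓU± = ±V(x)U± with U±(y,y) = I. Then det(∫₀¹ H(ξ) dξ) - 1 = (1/2) ∫₀¹∫₀¹ ‖(U₊(x,y) - U₋(x,y))e₁‖² dx dy, where e₁ = (1,0)ᵀ. -/

import Mathlib

open MeasureTheory Matrix intervalIntegral

attribute [local instance] Matrix.normedAddCommGroup Matrix.normedSpace

open Set

local notation "Mat" => Matrix (Fin 2) (Fin 2) ℝ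

private instance instENAddCommMonoidMat : ENormedAddCommMonoid Mat :=
  NormedAddCommGroup.toENormedAddCommMonoid

private instance instPMSMat : TopologicalSpace.PseudoMetrizableSpace Mat :=
  inferInstanceAs (TopologicalSpace.PseudoMetrizableSpace (Fin 2 → Fin 2 → ℝ))

private lemma norm_one_le' : ‖(1 : Mat)‖ ≤ 1 := by
  rw [Matrix.norm_le_iff zero_le_one]
  intro i j
  by_cases h : i = j <;> simp [Matrix.one_apply, h]

private lemma norm_mul_le2 (A B : Mat) : ‖A * B‖ ≤ 2 * ‖A‖ * ‖B‖ := by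
  rw [Matrix.norm_le_iff (by positivity)]
  intro i j
  rw [Matrix.mul_apply]
  calc ‖∑ k, A i k * B k j‖ ≤ ∑ k, ‖A i k * B k j‖ := norm_sum_le _ _
    _ ≤ ∑ _k : Fin 2, ‖A‖ * ‖B‖ := Finset.sum_le_sum (fun k _ => by
        rw [norm_mul]
        exact mul_le_mul (Matrix.norm_entry_le_entrywise_sup_norm A)
          (Matrix.norm_entry_le_entrywise_sup_norm B) (norm_nonneg _) (norm_nonneg _))
    _ = 2 * ‖A‖ * ‖B‖ := by simp [Finset.sum_const]; ring

private lemma aesm_mul {f g : ℝ → Mat} {μ : Measure ℝ} (hf : AEStronglyMeasurable f μ)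
    (hg : AEStronglyMeasurable g μ) : AEStronglyMeasurable (fun s => f s * g s) μ :=
  (Continuous.matrix_mul (continuous_fst (Y := Mat)) continuous_snd).comp_aestronglyMeasurable
    (hf.prodMk hg)

/-- product with a bounded function on the right is integrable -/
private lemma integrableOn_mul_right_of_bound {A M : ℝ → Mat} {s : Set ℝ} (hs : MeasurableSet s)
    (hA : IntegrableOn A s) (hM : AEStronglyMeasurable M (volume.restrict s)) (C : ℝ)
    (hC : ∀ x ∈ s, ‖M x‖ ≤ C) : IntegrableOn (fun t => A t * M t) s := by
  refine ((hA.norm.const_mul (2 * C)).mono' (aesm_mul hA.aestronglyMeasurable hM) ?_)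
  filter_upwards [ae_restrict_mem hs] with t ht
  calc ‖A t * M t‖ ≤ 2 * ‖A t‖ * ‖M t‖ := norm_mul_le2 _ _
    _ ≤ 2 * ‖A t‖ * C := by
        have := norm_nonneg (A t); nlinarith [hC t ht]
    _ = 2 * C * ‖A t‖ := by ring

private lemma integrableOn_mul_left_of_bound {A M : ℝ → Mat} {s : Set ℝ} (hs : MeasurableSet s)
    (hA : IntegrableOn A s) (hM : AEStronglyMeasurable M (volume.restrict s)) (C : ℝ)
    (hC : ∀ x ∈ s, ‖M x‖ ≤ C) : IntegrableOn (fun t => M t * A t) s := by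
  refine ((hA.norm.const_mul (2 * C)).mono' (aesm_mul hM hA.aestronglyMeasurable) ?_)
  filter_upwards [ae_restrict_mem hs] with t ht
  calc ‖M t * A t‖ ≤ 2 * ‖M t‖ * ‖A t‖ := norm_mul_le2 _ _
    _ ≤ 2 * C * ‖A t‖ := by
        have := norm_nonneg (A t); nlinarith [hC t ht]

private lemma lin_ii {F : Type*} [NormedAddCommGroup F] [NormedSpace ℝ F] [CompleteSpace F]
    (L : Mat →ₗ[ℝ] F) {f : ℝ → Mat} {a b : ℝ} (hf : IntervalIntegrable f volume a b) :
    ∫ s in a..b, L (f s) = L (∫ s in a..b, f s) :=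
  (LinearMap.toContinuousLinearMap L).intervalIntegral_comp_comm hf

private lemma ii_of_icc {E : Type*} [NormedAddCommGroup E] {f : ℝ → E} {a b : ℝ} (hab : a ≤ b)
    (h : IntegrableOn f (Icc a b)) : IntervalIntegrable f volume a b := by
  rw [intervalIntegrable_iff']
  rwa [uIcc_of_le hab]
private def entryLM (i j : Fin 2) : Mat →ₗ[ℝ] ℝ :=
  (LinearMap.proj j).comp (LinearMap.proj (R := ℝ) (φ := fun _ : Fin 2 => Fin 2 → ℝ) i)

@[simp] private lemma entryLM_apply (i j : Fin 2) (A : Mat) : entryLM i j A = A i j := rfl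

private def transLM : Mat →ₗ[ℝ] Mat where
  toFun A := Aᵀ
  map_add' A B := by ext i j; simp
  map_smul' c A := by ext i j; simp

@[simp] private lemma transLM_apply (A : Mat) : transLM A = Aᵀ := rfl

private def adjLM : Mat →ₗ[ℝ] Mat where
  toFun A := A.trace • (1 : Mat) - A
  map_add' A B := by simp [Matrix.trace_add, add_smul]; abel
  map_smul' c A := by simp [Matrix.trace_smul, smul_sub, smul_smul]

private lemma adjLM_apply (A : Mat) : adjLM A = adjugate A := by
  rw [Matrix.adjugate_fin_two]
  show A.trace • (1 : Mat) - A = _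
  ext i j
  rw [Matrix.trace_fin_two]
  fin_cases i <;> fin_cases j <;>
    simp [Matrix.smul_apply, Matrix.one_apply] <;> ring

private lemma self_add_adjugate (A : Mat) : A + adjugate A = A.trace • (1 : Mat) := by
  rw [← adjLM_apply]; show A + (A.trace • (1 : Mat) - A) = _; abel
private lemma half_step {φ u : ℝ → ℝ} {p q K : ℝ} (hpq : p ≤ q)
    (hφ : IntegrableOn φ (Icc p q)) (hφ0 : ∀ s, 0 ≤ φ s)
    (hu : ContinuousOn u (Icc p q)) (hu0 : ∀ s, 0 ≤ u s)
    (hineq : ∀ x ∈ Icc p q, u x ≤ K + ∫ s in p..x, φ s * u s)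
    (hhalf : (∫ s in p..q, φ s) ≤ 1/2) :
    ∀ x ∈ Icc p q, u x ≤ 2 * K := by
  obtain ⟨z, hz, hmax⟩ := isCompact_Icc.exists_isMaxOn (nonempty_Icc.2 hpq) hu
  set S := u z with hSdef
  have hS0 : 0 ≤ S := hu0 z
  have humeas : AEStronglyMeasurable u (volume.restrict (Icc p q)) :=
    hu.aestronglyMeasurable measurableSet_Icc
  have hφu : IntegrableOn (fun s => φ s * u s) (Icc p q) := by
    refine (hφ.norm.const_mul S).mono' (hφ.aestronglyMeasurable.mul humeas) ?_
    filter_upwards [ae_restrict_mem measurableSet_Icc] with t ht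
    have h1 : |φ t * u t| = φ t * u t := abs_of_nonneg (mul_nonneg (hφ0 t) (hu0 t))
    have h2 : ‖φ t‖ = φ t := abs_of_nonneg (hφ0 t)
    rw [Real.norm_eq_abs, h1, h2]
    have h3 : φ t * u t ≤ φ t * u z := mul_le_mul_of_nonneg_left (hmax ht) (hφ0 t)
    have h4 : S * φ t = φ t * u z := by rw [hSdef]; ring
    linarith
  have key : S ≤ K + S * (1/2) := by
    have hz1 : p ≤ z := hz.1
    calc S ≤ K + ∫ s in p..z, φ s * u s := hineq z hz
      _ ≤ K + ∫ s in p..z, φ s * S := by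
          gcongr
          refine intervalIntegral.integral_mono_on hz1
            (ii_of_icc hz1 (hφu.mono_set (Icc_subset_Icc le_rfl hz.2)))
            (ii_of_icc hz1 ((hφ.mono_set (Icc_subset_Icc le_rfl hz.2)).mul_const S))
            (fun t ht => mul_le_mul_of_nonneg_left (hmax (Icc_subset_Icc le_rfl hz.2 ht)) (hφ0 t))
      _ ≤ K + ∫ s in p..q, φ s * S := by
          gcongr
          have hsub : (∫ s in p..z, φ s * S) + (∫ s in z..q, φ s * S)
              = ∫ s in p..q, φ s * S := by
            apply intervalIntegral.integral_add_adjacent_intervals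
            · exact ii_of_icc hz1 ((hφ.mono_set (Icc_subset_Icc le_rfl hz.2)).mul_const S)
            · exact ii_of_icc hz.2 ((hφ.mono_set (Icc_subset_Icc hz1 le_rfl)).mul_const S)
          have hnn : 0 ≤ ∫ s in z..q, φ s * S :=
            intervalIntegral.integral_nonneg hz.2 (fun t _ => mul_nonneg (hφ0 t) hS0)
          linarith
      _ = K + S * ∫ s in p..q, φ s := by
          rw [intervalIntegral.integral_mul_const]; ring_nf
      _ ≤ K + S * (1/2) := by nlinarith
  intro x hx
  have : S ≤ 2 * K := by linarith
  exact le_trans (hmax hx) this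
private def gB (R : ℝ) : ℕ → ℝ
  | 0 => 2
  | n+1 => max (gB R n) (2 * (1 + gB R n * R))

private lemma gB_nonneg (R : ℝ) (n : ℕ) : 0 ≤ gB R n := by
  induction n with
  | zero => norm_num [gB]
  | succ n ih => exact le_trans ih (le_max_left _ _)

private lemma gronwall {φ u : ℝ → ℝ} {y t R : ℝ} (hyt : y ≤ t)
    (hφ : IntegrableOn φ (Icc y t)) (hφ0 : ∀ s, 0 ≤ φ s)
    (hR : (∫ s in y..t, φ s) ≤ R)
    (hu : ContinuousOn u (Icc y t)) (hu0 : ∀ s, 0 ≤ u s)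
    (hineq : ∀ x ∈ Icc y t, u x ≤ 1 + ∫ s in y..x, φ s * u s) :
    ∀ x ∈ Icc y t, u x ≤ gB R (⌈2*R⌉₊) := by
  set Φ : ℝ → ℝ := fun r => ∫ s in y..r, φ s with hΦdef
  have hΦint : ∀ r ∈ Icc y t, IntervalIntegrable φ volume y r := fun r hr =>
    ii_of_icc hr.1 (hφ.mono_set (Icc_subset_Icc le_rfl hr.2))
  have hΦdiff : ∀ r ∈ Icc y t, ∀ r' ∈ Icc y t, r ≤ r' → Φ r' - Φ r = ∫ s in r..r', φ s := by
    intro r hr r' hr' _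
    rw [hΦdef]
    simp only
    rw [← intervalIntegral.integral_interval_sub_left (hΦint r' hr') (hΦint r hr)]
  have hΦmono : ∀ r ∈ Icc y t, ∀ r' ∈ Icc y t, r ≤ r' → Φ r ≤ Φ r' := by
    intro r hr r' hr' hrr'
    have := hΦdiff r hr r' hr' hrr'
    have hnn : 0 ≤ ∫ s in r..r', φ s :=
      intervalIntegral.integral_nonneg hrr' (fun s _ => hφ0 s)
    linarith
  have hΦ0 : Φ y = 0 := by simp [hΦdef]
  have hΦcont : ContinuousOn Φ (Icc y t) := by
    have := intervalIntegral.continuousOn_primitive_interval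
      (f := φ) (a := y) (b := t) (μ := volume) (by rwa [uIcc_of_le hyt])
    rwa [uIcc_of_le hyt] at this
  have hRnn : 0 ≤ R := le_trans (by rw [← hΦ0]; exact hΦmono y ⟨le_rfl, hyt⟩ t ⟨hyt, le_rfl⟩ hyt) hR
  -- u is bounded on [y,t]
  obtain ⟨Cu, hCu⟩ := isCompact_Icc.exists_bound_of_continuousOn hu
  have hφu : IntegrableOn (fun s => φ s * u s) (Icc y t) := by
    refine (hφ.norm.const_mul Cu).mono'
      (hφ.aestronglyMeasurable.mul (hu.aestronglyMeasurable measurableSet_Icc)) ?_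
    filter_upwards [ae_restrict_mem measurableSet_Icc] with s hs
    rw [Real.norm_eq_abs, abs_of_nonneg (mul_nonneg (hφ0 s) (hu0 s)), Real.norm_eq_abs,
      abs_of_nonneg (hφ0 s)]
    have h5 := hCu s hs
    rw [Real.norm_eq_abs, abs_of_nonneg (hu0 s)] at h5
    nlinarith [hφ0 s]
  have claim : ∀ n : ℕ, ∀ q ∈ Icc y t, Φ q ≤ n/2 → ∀ x ∈ Icc y q, u x ≤ gB R n := by
    intro n
    induction n with
    | zero =>
      intro q hq hΦq x hx
      have := half_step (K := 1) hq.1 (hφ.mono_set (Icc_subset_Icc le_rfl hq.2)) hφ0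
        (hu.mono (Icc_subset_Icc le_rfl hq.2)) hu0
        (fun x hx => hineq x ⟨hx.1, le_trans hx.2 hq.2⟩)
        (by norm_num at hΦq ⊢; linarith)
      simpa [gB] using this x hx
    | succ n ih =>
      intro q hq hΦq x hx
      by_cases hcase : Φ q ≤ n/2
      · exact le_trans (ih q hq hcase x hx) (le_max_left _ _)
      push_neg at hcase
      -- find midpoint m with Φ m = n/2
      obtain ⟨m, hm, hΦm⟩ : ∃ m ∈ Icc y q, Φ m = n/2 := by
        have h1 : (n/2 : ℝ) ∈ Icc (Φ y) (Φ q) := by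
          constructor
          · rw [hΦ0]; positivity
          · exact le_of_lt hcase
        exact intermediate_value_Icc hq.1 (hΦcont.mono (Icc_subset_Icc le_rfl hq.2)) h1
      have hmt : m ∈ Icc y t := ⟨hm.1, le_trans hm.2 hq.2⟩
      have hIH : ∀ z ∈ Icc y m, u z ≤ gB R n := ih m hmt (le_of_eq hΦm)
      by_cases hxm : x ≤ m
      · exact le_trans (hIH x ⟨hx.1, hxm⟩) (le_max_left _ _)
      push_neg at hxm
      -- half step on [m, q] with K := 1 + gB R n * R
      have hKn : (0:ℝ) ≤ 1 + gB R n * R := by nlinarith [gB_nonneg R n]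
      have hstep := half_step (p := m) (q := q) (K := 1 + gB R n * R) hm.2
        (hφ.mono_set (Icc_subset_Icc hm.1 hq.2)) hφ0
        (hu.mono (Icc_subset_Icc hm.1 hq.2)) hu0 ?_ ?_
      · have hx2 := hstep x ⟨le_of_lt hxm, hx.2⟩
        simp only [gB]
        exact le_trans hx2 (le_max_right _ _)
      · -- hineq on [m,q]
        intro w hw
        have hwt : w ∈ Icc y t := ⟨le_trans hm.1 hw.1, le_trans hw.2 hq.2⟩
        have h1 := hineq w hwt
        have hiym : IntervalIntegrable (fun s => φ s * u s) volume y m :=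
          ii_of_icc hm.1 (hφu.mono_set (Icc_subset_Icc le_rfl hmt.2))
        have himw : IntervalIntegrable (fun s => φ s * u s) volume m w :=
          ii_of_icc hw.1 ((hφu.mono_set (Icc_subset_Icc hm.1 hwt.2)))
        have hadd : (∫ s in y..m, φ s * u s) + (∫ s in m..w, φ s * u s)
            = ∫ s in y..w, φ s * u s :=
          intervalIntegral.integral_add_adjacent_intervals hiym himw
        have hb1 : (∫ s in y..m, φ s * u s) ≤ ∫ s in y..m, φ s * gB R n := by
          refine intervalIntegral.integral_mono_on hm.1 hiym
            (ii_of_icc hm.1 ((hφ.mono_set (Icc_subset_Icc le_rfl hmt.2)).mul_const _)) ?_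
          intro s hs
          exact mul_le_mul_of_nonneg_left (hIH s hs) (hφ0 s)
        have hb2 : (∫ s in y..m, φ s * gB R n) = Φ m * gB R n := by
          rw [hΦdef]; simp only
          rw [intervalIntegral.integral_mul_const]
        have hb3 : Φ m * gB R n ≤ R * gB R n := by
          have hΦmR : Φ m ≤ R := le_trans (hΦmono m hmt t ⟨hyt, le_rfl⟩ hmt.2) hR
          exact mul_le_mul_of_nonneg_right hΦmR (gB_nonneg R n)
        have := hineq w hwt
        have hgoal : u w ≤ (1 + gB R n * R) + ∫ s in m..w, φ s * u s := by
          nlinarith []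
        exact hgoal
      · -- half condition on [m,q]
        have hd := hΦdiff m hmt q hq hm.2
        have : Φ q ≤ (n+1)/2 := by
          have := hΦq; push_cast at this ⊢; linarith
        rw [hΦm] at hd
        linarith [hd]
  intro x hx
  have h2R : Φ t ≤ (⌈2*R⌉₊ : ℝ)/2 := by
    have := Nat.le_ceil (2*R)
    have hΦtR : Φ t ≤ R := hR
    linarith
  exact claim (⌈2*R⌉₊) t ⟨hyt, le_rfl⟩ h2R x hx
private lemma reg_right {A M : ℝ → Mat} {y b : ℝ} (hyb : y ≤ b)
    (hA : IntegrableOn A (Icc y b))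
    (hM : ∀ x ∈ Icc y b, M x = 1 + ∫ s in y..x, A s * M s) :
    IntegrableOn (fun s => A s * M s) (Icc y b) := by
  set f : ℝ → Mat := fun s => A s * M s with hfdef
  set T : Set ℝ := {t | t ∈ Icc y b ∧ IntegrableOn f (Icc y t)} with hTdef
  have hyT : y ∈ T := by
    refine ⟨⟨le_rfl, hyb⟩, ?_⟩
    rw [integrableOn_Icc_iff_integrableOn_Ioc]
    simp [integrableOn_empty]
  have hTne : T.Nonempty := ⟨y, hyT⟩
  have hTbdd : BddAbove T := ⟨b, fun t ht => ht.1.2⟩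
  set c : ℝ := sSup T with hcdef
  have hyc : y ≤ c := le_csSup hTbdd hyT
  have hcb : c ≤ b := csSup_le hTne (fun t ht => ht.1.2)
  -- junk: beyond c the solution is identically 1
  have hjunk : ∀ x ∈ Icc y b, c < x → M x = 1 := by
    intro x hx hcx
    have hxT : x ∉ T := fun hxT => absurd (le_csSup hTbdd hxT) (not_le.2 hcx)
    have hnint : ¬ IntegrableOn f (Icc y x) := fun h => hxT ⟨hx, h⟩
    have : ¬ IntervalIntegrable f volume y x := by
      rw [intervalIntegrable_iff', uIcc_of_le hx.1]
      exact hnint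
    rw [hM x hx, intervalIntegral.integral_undef this, add_zero]
  -- below c everything is integrable
  have hIco : ∀ x, x ∈ Ico y c → x ∈ T := by
    intro x hx
    obtain ⟨t, htT, hxt⟩ := exists_lt_of_lt_csSup hTne hx.2
    exact ⟨⟨hx.1, le_trans (le_of_lt hxt) htT.1.2⟩, htT.2.mono_set (Icc_subset_Icc le_rfl (le_of_lt hxt))⟩
  -- continuity of M on [y, t] for t ∈ T
  have hcont : ∀ t, t ∈ T → ContinuousOn M (Icc y t) := by
    intro t ht
    have hprim : ContinuousOn (fun x => (1 : Mat) + ∫ s in y..x, f s) (Icc y t) := by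
      have h2 : ContinuousOn (fun x => ∫ s in y..x, f s) (Icc y t) := by
        have := intervalIntegral.continuousOn_primitive_interval
          (f := f) (a := y) (b := t) (μ := volume) (by rw [uIcc_of_le ht.1.1]; exact ht.2)
        rwa [uIcc_of_le ht.1.1] at this
      exact continuousOn_const.add h2
    exact hprim.congr (fun x hx => hM x ⟨hx.1, le_trans hx.2 ht.1.2⟩)
  -- Grönwall: uniform bound on [y, t] for t ∈ T
  set φ : ℝ → ℝ := fun s => 2 * ‖A s‖ with hφdef
  have hφ0 : ∀ s, 0 ≤ φ s := fun s => by positivity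
  have hφint : IntegrableOn φ (Icc y b) := (hA.norm.const_mul 2)
  set R : ℝ := ∫ s in y..b, φ s with hRdef
  have hbound : ∀ t, t ∈ T → ∀ x ∈ Icc y t, ‖M x‖ ≤ gB R (⌈2*R⌉₊) := by
    intro t ht
    have hΦR : (∫ s in y..t, φ s) ≤ R := by
      rw [hRdef]
      have h1 : IntervalIntegrable φ volume y t := ii_of_icc ht.1.1 (hφint.mono_set (Icc_subset_Icc le_rfl ht.1.2))
      have h2 : IntervalIntegrable φ volume t b := ii_of_icc ht.1.2 (hφint.mono_set (Icc_subset_Icc ht.1.1 le_rfl))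
      have h3 : (∫ s in y..t, φ s) + (∫ s in t..b, φ s) = ∫ s in y..b, φ s :=
        intervalIntegral.integral_add_adjacent_intervals h1 h2
      have h4 : 0 ≤ ∫ s in t..b, φ s :=
        intervalIntegral.integral_nonneg ht.1.2 (fun s _ => hφ0 s)
      linarith
    refine gronwall ht.1.1 (hφint.mono_set (Icc_subset_Icc le_rfl ht.1.2)) hφ0 hΦR
      ((hcont t ht).norm) (fun s => norm_nonneg _) ?_
    intro x hx
    have hxb : x ∈ Icc y b := ⟨hx.1, le_trans hx.2 ht.1.2⟩
    rw [hM x hxb]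
    have hfint_yx : IntegrableOn f (Icc y x) := ht.2.mono_set (Icc_subset_Icc le_rfl hx.2)
    calc ‖(1 : Mat) + ∫ s in y..x, f s‖ ≤ ‖(1 : Mat)‖ + ‖∫ s in y..x, f s‖ := norm_add_le _ _
      _ ≤ 1 + ∫ s in y..x, ‖f s‖ := by
          gcongr
          · exact norm_one_le'
          · exact intervalIntegral.norm_integral_le_integral_norm hx.1
      _ ≤ 1 + ∫ s in y..x, φ s * ‖M s‖ := by
          gcongr
          refine intervalIntegral.integral_mono_on hx.1
            (ii_of_icc hx.1 hfint_yx.norm) ?_ ?_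
          · -- integrability of φ * ‖M‖ on [y,x]
            refine ii_of_icc hx.1 ?_
            have hMc : ContinuousOn (fun s => ‖M s‖) (Icc y x) :=
              ((hcont t ht).mono (Icc_subset_Icc le_rfl hx.2)).norm
            obtain ⟨C, hC⟩ := isCompact_Icc.exists_bound_of_continuousOn hMc
            refine ((hφint.mono_set (Icc_subset_Icc le_rfl hxb.2)).norm.const_mul C).mono'
              ((hφint.mono_set (Icc_subset_Icc le_rfl hxb.2)).aestronglyMeasurable.mul
                (hMc.aestronglyMeasurable measurableSet_Icc)) ?_
            filter_upwards [ae_restrict_mem measurableSet_Icc] with s hs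
            have h5 := hC s hs
            rw [norm_norm] at h5
            have : ‖φ s * ‖M s‖‖ = φ s * ‖M s‖ :=
              abs_of_nonneg (mul_nonneg (hφ0 s) (norm_nonneg _))
            rw [this, Real.norm_eq_abs, abs_of_nonneg (hφ0 s)]
            nlinarith [hφ0 s, norm_nonneg (M s)]
          · intro s hs
            calc ‖f s‖ = ‖A s * M s‖ := rfl
              _ ≤ 2 * ‖A s‖ * ‖M s‖ := norm_mul_le2 _ _
              _ = φ s * ‖M s‖ := by rw [hφdef]
  -- M is bounded by C on [y, c)
  set C : ℝ := gB R (⌈2*R⌉₊) with hCdef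
  have hbd : ∀ x ∈ Ico y c, ‖M x‖ ≤ C := by
    intro x hx
    exact hbound x (hIco x hx) x ⟨hx.1, le_rfl⟩
  -- f is integrable on [y, c]
  have hcT : IntegrableOn f (Icc y c) := by
    rw [integrableOn_Icc_iff_integrableOn_Ioo]
    have hMmeas : ContinuousOn M (Ico y c) := by
      intro x hx
      have hxT : x ∈ T := hIco x hx
      obtain ⟨t', ht'T, hxt'⟩ := exists_lt_of_lt_csSup hTne hx.2
      have h1 : ContinuousWithinAt M (Icc y t') x :=
        (hcont t' ht'T).continuousWithinAt ⟨hx.1, le_of_lt hxt'⟩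
      refine h1.mono_of_mem_nhdsWithin ?_
      have : Ico y c ∩ Iio t' ⊆ Icc y t' := fun z hz => ⟨hz.1.1, le_of_lt hz.2⟩
      exact Filter.mem_of_superset (inter_mem_nhdsWithin _ (Iio_mem_nhds hxt')) this
    have haesm : AEStronglyMeasurable f (volume.restrict (Ioo y c)) :=
      aesm_mul (hA.mono_set (fun z hz => ⟨le_of_lt hz.1, le_trans (le_of_lt hz.2) hcb⟩)).aestronglyMeasurable
        ((hMmeas.mono Ioo_subset_Ico_self).aestronglyMeasurable measurableSet_Ioo)
    refine (((hA.mono_set (fun z (hz : z ∈ Ioo y c) =>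
        ⟨le_of_lt hz.1, le_trans (le_of_lt hz.2) hcb⟩)).norm.const_mul (2*C)).mono' haesm ?_)
    filter_upwards [ae_restrict_mem measurableSet_Ioo] with s hs
    calc ‖f s‖ ≤ 2 * ‖A s‖ * ‖M s‖ := norm_mul_le2 _ _
      _ ≤ 2 * ‖A s‖ * C := by
          have h6 := hbd s ⟨le_of_lt hs.1, hs.2⟩
          nlinarith [norm_nonneg (A s), norm_nonneg (M s)]
      _ = 2 * C * ‖A s‖ := by ring
  -- beyond c, f = A is integrable
  have hcb' : IntegrableOn f (Ioc c b) := by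
    refine (hA.mono_set (Ioc_subset_Icc_self.trans (Icc_subset_Icc hyc le_rfl))).congr_fun ?_ measurableSet_Ioc
    intro s hs
    rw [hfdef]
    simp only
    rw [hjunk s ⟨le_trans hyc (le_of_lt hs.1), hs.2⟩ hs.1, mul_one]
  have : IntegrableOn f (Icc y c ∪ Ioc c b) := hcT.union hcb'
  exact this.mono_set (fun z hz => by
    rcases le_or_gt z c with h | h
    · exact Or.inl ⟨hz.1, h⟩
    · exact Or.inr ⟨h, hz.2⟩)
private lemma reg {A M : ℝ → Mat} {y : ℝ} (hy : y ∈ Icc (0:ℝ) 1)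
    (hA : IntegrableOn A (Icc (0:ℝ) 1))
    (hM : ∀ x ∈ Icc (0:ℝ) 1, M x = 1 + ∫ s in y..x, A s * M s) :
    IntegrableOn (fun s => A s * M s) (Icc (0:ℝ) 1) ∧ ContinuousOn M (Icc (0:ℝ) 1) := by
  have hrt : IntegrableOn (fun s => A s * M s) (Icc y 1) := by
    refine reg_right hy.2 (hA.mono_set (Icc_subset_Icc hy.1 le_rfl)) ?_
    intro x hx
    exact hM x ⟨le_trans hy.1 hx.1, hx.2⟩
  have hlt : IntegrableOn (fun s => A s * M s) (Icc 0 y) := by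
    -- reflect: M' t = M (y - t), A' t = -A (y - t), on [0, y]
    set A' : ℝ → Mat := fun t => -A (y - t) with hA'def
    set M' : ℝ → Mat := fun t => M (y - t) with hM'def
    have hA'int : IntegrableOn A' (Icc 0 y) := by
      have h1 : IntervalIntegrable A volume 0 y :=
        ii_of_icc hy.1 (hA.mono_set (Icc_subset_Icc le_rfl hy.2))
      have h2 : IntervalIntegrable (fun t => A (y - t)) volume (y - 0) (y - y) :=
        h1.comp_sub_left y
      rw [sub_self, sub_zero] at h2
      replace h2 := h2.symm
      have h3 := (h2.neg)
      rw [intervalIntegrable_iff', uIcc_of_le hy.1] at h3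
      exact h3
    have hM'eq : ∀ t ∈ Icc (0:ℝ) y, M' t = 1 + ∫ s in (0:ℝ)..t, A' s * M' s := by
      intro t ht
      have hyt : y - t ∈ Icc (0:ℝ) 1 := ⟨by linarith [ht.2], by linarith [ht.1, hy.2]⟩
      have h0 : M' t = 1 + ∫ s in y..(y - t), A s * M s := hM (y - t) hyt
      have hsub : (∫ s in (0:ℝ)..t, A' s * M' s)
          = ∫ s in y..(y - t), A s * M s := by
        have h1 : (∫ s in (0:ℝ)..t, A' s * M' s)
            = ∫ s in (0:ℝ)..t, -((fun r => A r * M r) (y - s)) := by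
          apply intervalIntegral.integral_congr
          intro s _
          simp [hA'def, hM'def, neg_mul]
        rw [h1, intervalIntegral.integral_neg, intervalIntegral.integral_comp_sub_left
          (fun r => A r * M r) y]
        rw [show y - 0 = y by ring]
        rw [← intervalIntegral.integral_symm]
      rw [h0, hsub]
    have hrr := reg_right hy.1 hA'int hM'eq
    -- transfer back
    have h4 : IntervalIntegrable (fun s => A' s * M' s) volume 0 y := by
      rw [intervalIntegrable_iff', uIcc_of_le hy.1]; exact hrr
    have h5 : IntervalIntegrable (fun t => (fun s => A' s * M' s) (y - t)) volume (y - 0) (y - y) :=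
      h4.comp_sub_left y
    rw [sub_self, sub_zero] at h5
    replace h5 := h5.symm
    have h6 : IntervalIntegrable (fun t => -((fun s => A' s * M' s) (y - t))) volume 0 y := h5.neg
    have h7 : (fun t => -((fun s => A' s * M' s) (y - t))) = fun t => A t * M (y - (y - t)) := by
      funext t
      simp [hA'def, hM'def, neg_mul]
    rw [h7] at h6
    have h8 : IntervalIntegrable (fun t => A t * M t) volume 0 y := by
      have : (fun t => A t * M (y - (y - t))) = fun t => A t * M t := by
        funext t; rw [show y - (y - t) = t by ring]
      rwa [this] at h6
    rw [intervalIntegrable_iff', uIcc_of_le hy.1] at h8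
    exact h8
  have hint : IntegrableOn (fun s => A s * M s) (Icc (0:ℝ) 1) := by
    have := hlt.union hrt
    exact this.mono_set (fun z hz => by
      rcases le_or_gt z y with h | h
      · exact Or.inl ⟨hz.1, h⟩
      · exact Or.inr ⟨le_of_lt h, hz.2⟩)
  refine ⟨hint, ?_⟩
  have hii : IntervalIntegrable (fun s => A s * M s) volume 0 1 := by
    rw [intervalIntegrable_iff', uIcc_of_le (zero_le_one)]; exact hint
  have hprim : ContinuousOn (fun x => (1:Mat) + ∫ s in y..x, A s * M s) (uIcc (0:ℝ) 1) := by
    refine continuousOn_const.add (intervalIntegral.continuousOn_primitive_interval' hii ?_)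
    rwa [uIcc_of_le zero_le_one]
  rw [uIcc_of_le zero_le_one] at hprim
  exact hprim.congr hM
private lemma integral_const_mul_mat {h : ℝ → Mat} {μ : Measure ℝ} (c : Mat)
    (hh : Integrable h μ) : ∫ t, c * h t ∂μ = c * ∫ t, h t ∂μ :=
  (LinearMap.toContinuousLinearMap (LinearMap.mulLeft ℝ c)).integral_comp_comm hh

private lemma integral_mul_const_mat {h : ℝ → Mat} {μ : Measure ℝ} (c : Mat)
    (hh : Integrable h μ) : ∫ t, h t * c ∂μ = (∫ t, h t ∂μ) * c :=
  (LinearMap.toContinuousLinearMap (LinearMap.mulRight ℝ c)).integral_comp_comm hh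

set_option maxHeartbeats 1000000 in
private lemma fubini_core {f g : ℝ → Mat} {y x : ℝ} (hyx : y ≤ x)
    (hf : IntegrableOn f (Ioc y x)) (hg : IntegrableOn g (Ioc y x)) :
    (∫ s in y..x, f s * (∫ t in y..s, g t)) + (∫ s in y..x, (∫ t in y..s, f t) * g s)
      = (∫ s in y..x, f s) * (∫ s in y..x, g s) := by
  set μ : Measure ℝ := volume.restrict (Ioc y x) with hμdef
  have hfin : IsFiniteMeasure μ := by
    constructor
    rw [hμdef, Measure.restrict_apply_univ]
    exact measure_Ioc_lt_top
  have hfint : Integrable f μ := hf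
  have hgint : Integrable g μ := hg
  -- product integrability
  have haesm : AEStronglyMeasurable (fun p : ℝ × ℝ => f p.1 * g p.2) (μ.prod μ) :=
    (Continuous.matrix_mul (continuous_fst (Y := Mat)) continuous_snd).comp_aestronglyMeasurable
      ((hfint.aestronglyMeasurable.comp_fst).prodMk (hgint.aestronglyMeasurable.comp_snd))
  have hprod : Integrable (fun p : ℝ × ℝ => f p.1 * g p.2) (μ.prod μ) := by
    refine ((hfint.norm.mul_prod hgint.norm).const_mul 2).mono' haesm ?_
    refine Filter.Eventually.of_forall (fun p => ?_)
    calc ‖f p.1 * g p.2‖ ≤ 2 * ‖f p.1‖ * ‖g p.2‖ := norm_mul_le2 _ _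
      _ = 2 * (‖f p.1‖ * ‖g p.2‖) := by ring
  have hmeaslt : MeasurableSet {p : ℝ × ℝ | p.2 < p.1} :=
    measurableSet_lt measurable_snd measurable_fst
  have hmeasle : MeasurableSet {p : ℝ × ℝ | p.1 ≤ p.2} :=
    measurableSet_le measurable_fst measurable_snd
  have hQint : Integrable (fun p : ℝ × ℝ => if p.2 < p.1 then f p.1 * g p.2 else 0) (μ.prod μ) := by
    have := hprod.indicator hmeaslt
    refine this.congr ?_
    refine Filter.EventuallyEq.of_eq (funext fun p => ?_)
    by_cases h : p.2 < p.1 <;> simp [Set.indicator_apply, h]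
  have hFint : Integrable (fun p : ℝ × ℝ => if p.1 ≤ p.2 then f p.1 * g p.2 else 0) (μ.prod μ) := by
    have := hprod.indicator hmeasle
    refine this.congr ?_
    refine Filter.EventuallyEq.of_eq (funext fun p => ?_)
    by_cases h : p.1 ≤ p.2 <;> simp [Set.indicator_apply, h]
  -- inner integral representations
  have hinner_g : ∀ s ∈ Icc y x, (∫ t in y..s, g t) = ∫ t, (Iio s).indicator g t ∂μ := by
    intro s hs
    rw [MeasureTheory.integral_indicator measurableSet_Iio, hμdef,
      Measure.restrict_restrict measurableSet_Iio]
    have hset : Iio s ∩ Ioc y x = Ioo y s := by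
      ext t
      simp only [mem_inter_iff, mem_Iio, mem_Ioc, mem_Ioo]
      constructor
      · rintro ⟨h1, h2⟩; exact ⟨h2.1, h1⟩
      · rintro ⟨h1, h2⟩; exact ⟨h2, h1, le_trans (le_of_lt h2) hs.2⟩
    rw [hset, intervalIntegral.integral_of_le hs.1, MeasureTheory.integral_Ioc_eq_integral_Ioo]
  have hinner_f : ∀ s ∈ Icc y x, (∫ t in y..s, f t) = ∫ t, (Iic s).indicator f t ∂μ := by
    intro s hs
    rw [MeasureTheory.integral_indicator measurableSet_Iic, hμdef,
      Measure.restrict_restrict measurableSet_Iic]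
    have hset : Iic s ∩ Ioc y x = Ioc y s := by
      ext t
      simp only [mem_inter_iff, mem_Iic, mem_Ioc]
      constructor
      · rintro ⟨h1, h2⟩; exact ⟨h2.1, h1⟩
      · rintro ⟨h1, h2⟩; exact ⟨h2, h1, le_trans h2 hs.2⟩
    rw [hset, intervalIntegral.integral_of_le hs.1]
  -- first term as a double integral
  have hT1 : (∫ s in y..x, f s * (∫ t in y..s, g t))
      = ∫ p : ℝ × ℝ, (if p.2 < p.1 then f p.1 * g p.2 else 0) ∂(μ.prod μ) := by
    rw [intervalIntegral.integral_congr (g := fun s => ∫ t, (if t < s then f s * g t else 0) ∂μ) ?_]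
    · rw [intervalIntegral.integral_of_le hyx, ← hμdef]
      exact MeasureTheory.integral_integral hQint
    · intro s hs
      rw [uIcc_of_le hyx] at hs
      simp only
      rw [hinner_g s hs, ← integral_const_mul_mat (f s) (hgint.indicator measurableSet_Iio)]
      congr 1
      funext t
      by_cases h : t < s <;> simp [Set.indicator_apply, h]
  -- second term as a double integral
  have hprod' : Integrable (fun p : ℝ × ℝ => f p.2 * g p.1) (μ.prod μ) := by
    have haesm' : AEStronglyMeasurable (fun p : ℝ × ℝ => f p.2 * g p.1) (μ.prod μ) :=
      (Continuous.matrix_mul (continuous_snd (X := Mat)) continuous_fst).comp_aestronglyMeasurable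
        ((hgint.aestronglyMeasurable.comp_fst).prodMk (hfint.aestronglyMeasurable.comp_snd))
    refine ((hgint.norm.mul_prod hfint.norm).const_mul 2).mono' haesm' ?_
    refine Filter.Eventually.of_forall (fun p => ?_)
    calc ‖f p.2 * g p.1‖ ≤ 2 * ‖f p.2‖ * ‖g p.1‖ := norm_mul_le2 _ _
      _ = 2 * (‖g p.1‖ * ‖f p.2‖) := by ring
  have hG2int : Integrable (fun p : ℝ × ℝ => if p.2 ≤ p.1 then f p.2 * g p.1 else 0) (μ.prod μ) := by
    have hm : MeasurableSet {p : ℝ × ℝ | p.2 ≤ p.1} := measurableSet_le measurable_snd measurable_fst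
    have := hprod'.indicator hm
    refine this.congr ?_
    refine Filter.EventuallyEq.of_eq (funext fun p => ?_)
    by_cases h : p.2 ≤ p.1 <;> simp [Set.indicator_apply, h]
  have hT2 : (∫ s in y..x, (∫ t in y..s, f t) * g s)
      = ∫ p : ℝ × ℝ, (if p.1 ≤ p.2 then f p.1 * g p.2 else 0) ∂(μ.prod μ) := by
    rw [intervalIntegral.integral_congr (g := fun s => ∫ t, (if t ≤ s then f t * g s else 0) ∂μ) ?_]
    · rw [intervalIntegral.integral_of_le hyx, ← hμdef]
      rw [MeasureTheory.integral_integral hG2int]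
      have hswap := MeasureTheory.integral_prod_swap (μ := μ) (ν := μ)
        (fun p : ℝ × ℝ => if p.1 ≤ p.2 then f p.1 * g p.2 else 0)
      exact hswap
    · intro s hs
      rw [uIcc_of_le hyx] at hs
      simp only
      rw [hinner_f s hs, ← integral_mul_const_mat (g s) (hfint.indicator measurableSet_Iic)]
      congr 1
      funext t
      by_cases h : t ≤ s <;> simp [Set.indicator_apply, h]
  -- combine
  have hsum : (fun p : ℝ × ℝ => (if p.2 < p.1 then f p.1 * g p.2 else 0)
      + (if p.1 ≤ p.2 then f p.1 * g p.2 else 0)) = fun p : ℝ × ℝ => f p.1 * g p.2 := by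
    funext p
    rcases lt_or_ge p.2 p.1 with h | h
    · rw [if_pos h, if_neg (not_le.2 h), add_zero]
    · rw [if_neg (not_lt.2 h), if_pos h, zero_add]
  rw [hT1, hT2, ← MeasureTheory.integral_add hQint hFint, hsum]
  rw [← MeasureTheory.integral_integral (f := fun a b => f a * g b) hprod]
  have hin : (fun s => ∫ t, f s * g t ∂μ) = fun s => f s * ∫ t, g t ∂μ := by
    funext s
    exact integral_const_mul_mat _ hgint
  rw [hin, integral_mul_const_mat _ hfint, intervalIntegral.integral_of_le hyx,
    intervalIntegral.integral_of_le hyx]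
private lemma lin_integrableOn {F : Type*} [NormedAddCommGroup F] [NormedSpace ℝ F]
    (L : Mat →ₗ[ℝ] F) {f : ℝ → Mat} {s : Set ℝ} (hf : IntegrableOn f s) :
    IntegrableOn (fun t => L (f t)) s :=
  (LinearMap.toContinuousLinearMap L).integrable_comp hf

private lemma ibp_le {f g F G : ℝ → Mat} {y x : ℝ}
    (hy : y ∈ Icc (0:ℝ) 1) (hx : x ∈ Icc (0:ℝ) 1) (hyx : y ≤ x)
    (hf : IntegrableOn f (Icc (0:ℝ) 1)) (hg : IntegrableOn g (Icc (0:ℝ) 1))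
    (hF : ∀ s ∈ Icc (0:ℝ) 1, F s = F y + ∫ t in y..s, f t)
    (hG : ∀ s ∈ Icc (0:ℝ) 1, G s = G y + ∫ t in y..s, g t) :
    F x * G x - F y * G y = ∫ s in y..x, (f s * G s + F s * g s) := by
  have hsub' : Ioc y x ⊆ Icc (0:ℝ) 1 :=
    fun z hz => ⟨le_trans hy.1 (le_of_lt hz.1), le_trans hz.2 hx.2⟩
  have hsubIcc : Icc y x ⊆ Icc (0:ℝ) 1 := Icc_subset_Icc hy.1 hx.2
  have hfI : IntegrableOn f (Ioc y x) := hf.mono_set hsub'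
  have hgI : IntegrableOn g (Ioc y x) := hg.mono_set hsub'
  have hfii : IntervalIntegrable f volume y x := by
    rw [intervalIntegrable_iff, uIoc_of_le hyx]; exact hfI
  have hgii : IntervalIntegrable g volume y x := by
    rw [intervalIntegrable_iff, uIoc_of_le hyx]; exact hgI
  -- primitives are continuous on [y,x]
  have hPf : ContinuousOn (fun s => ∫ t in y..s, f t) (Icc y x) := by
    have := intervalIntegral.continuousOn_primitive_interval (f := f) (a := y) (b := x)
      (μ := volume) (by rw [uIcc_of_le hyx]; exact hf.mono_set hsubIcc)
    rwa [uIcc_of_le hyx] at this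
  have hPg : ContinuousOn (fun s => ∫ t in y..s, g t) (Icc y x) := by
    have := intervalIntegral.continuousOn_primitive_interval (f := g) (a := y) (b := x)
      (μ := volume) (by rw [uIcc_of_le hyx]; exact hg.mono_set hsubIcc)
    rwa [uIcc_of_le hyx] at this
  obtain ⟨Cf, hCf⟩ := isCompact_Icc.exists_bound_of_continuousOn hPf
  obtain ⟨Cg, hCg⟩ := isCompact_Icc.exists_bound_of_continuousOn hPg
  -- interval integrabilities
  have II_fGy : IntervalIntegrable (fun s => f s * G y) volume y x := by
    rw [intervalIntegrable_iff, uIoc_of_le hyx]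
    exact lin_integrableOn (LinearMap.mulRight ℝ (G y)) hfI
  have II_Fyg : IntervalIntegrable (fun s => F y * g s) volume y x := by
    rw [intervalIntegrable_iff, uIoc_of_le hyx]
    exact lin_integrableOn (LinearMap.mulLeft ℝ (F y)) hgI
  have II_fPg : IntervalIntegrable (fun s => f s * (∫ t in y..s, g t)) volume y x := by
    rw [intervalIntegrable_iff, uIoc_of_le hyx]
    exact integrableOn_mul_right_of_bound measurableSet_Ioc hfI
      ((hPg.mono Ioc_subset_Icc_self).aestronglyMeasurable measurableSet_Ioc) Cg
      (fun z hz => hCg z (Ioc_subset_Icc_self hz))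
  have II_Pfg : IntervalIntegrable (fun s => (∫ t in y..s, f t) * g s) volume y x := by
    rw [intervalIntegrable_iff, uIoc_of_le hyx]
    exact integrableOn_mul_left_of_bound measurableSet_Ioc hgI
      ((hPf.mono Ioc_subset_Icc_self).aestronglyMeasurable measurableSet_Ioc) Cf
      (fun z hz => hCf z (Ioc_subset_Icc_self hz))
  -- decompose
  have e3 : (∫ s in y..x, f s * G y) = (∫ s in y..x, f s) * G y := by
    have := lin_ii (LinearMap.mulRight ℝ (G y)) hfii
    simpa using this
  have e4 : (∫ s in y..x, F y * g s) = F y * ∫ s in y..x, g s := by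
    have := lin_ii (LinearMap.mulLeft ℝ (F y)) hgii
    simpa using this
  have emain : (∫ s in y..x, (f s * G s + F s * g s))
      = ((∫ s in y..x, f s * G y) + ∫ s in y..x, f s * (∫ t in y..s, g t))
        + ((∫ s in y..x, F y * g s) + ∫ s in y..x, (∫ t in y..s, f t) * g s) := by
    have hEq : EqOn (fun s => f s * G s + F s * g s)
        (fun s => (f s * G y + f s * (∫ t in y..s, g t))
          + (F y * g s + (∫ t in y..s, f t) * g s)) (uIcc y x) := by
      intro s hs
      rw [uIcc_of_le hyx] at hs
      simp only
      rw [hG s (hsubIcc hs), hF s (hsubIcc hs), mul_add, add_mul]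
    rw [intervalIntegral.integral_congr hEq,
      intervalIntegral.integral_add (II_fGy.add II_fPg) (II_Fyg.add II_Pfg),
      intervalIntegral.integral_add II_fGy II_fPg,
      intervalIntegral.integral_add II_Fyg II_Pfg]
  have core := fubini_core hyx hfI hgI
  rw [hF x hx, hG x hx, emain, e3, e4]
  have hre : (∫ s in y..x, f s) * G y + (∫ s in y..x, f s * (∫ t in y..s, g t))
      + (F y * (∫ s in y..x, g s) + ∫ s in y..x, (∫ t in y..s, f t) * g s)
      = F y * (∫ s in y..x, g s) + (∫ s in y..x, f s) * G y
        + ((∫ s in y..x, f s * (∫ t in y..s, g t))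
          + ∫ s in y..x, (∫ t in y..s, f t) * g s) := by abel
  rw [hre, core]
  noncomm_ring

private lemma ii_mem {f : ℝ → Mat} (hf : IntegrableOn f (Icc (0:ℝ) 1)) {a b : ℝ}
    (ha : a ∈ Icc (0:ℝ) 1) (hb : b ∈ Icc (0:ℝ) 1) : IntervalIntegrable f volume a b := by
  rw [intervalIntegrable_iff]
  refine hf.mono_set (subset_trans Ioc_subset_Icc_self ?_)
  rw [← uIcc_of_le (zero_le_one (α := ℝ))]
  exact uIcc_subset_uIcc (by rw [uIcc_of_le (zero_le_one (α := ℝ))]; exact ha)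
    (by rw [uIcc_of_le (zero_le_one (α := ℝ))]; exact hb)

private lemma re_anchor {F f : ℝ → Mat} {y z : ℝ} (hy : y ∈ Icc (0:ℝ) 1) (hz : z ∈ Icc (0:ℝ) 1)
    (hf : IntegrableOn f (Icc (0:ℝ) 1))
    (hF : ∀ s ∈ Icc (0:ℝ) 1, F s = F y + ∫ t in y..s, f t) :
    ∀ s ∈ Icc (0:ℝ) 1, F s = F z + ∫ t in z..s, f t := by
  intro s hs
  rw [hF s hs, hF z hz]
  have h1 := intervalIntegral.integral_interval_sub_left (ii_mem hf hy hs) (ii_mem hf hy hz)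
  rw [← h1]
  abel

private lemma ibp_const {f g F G : ℝ → Mat} {y : ℝ} (hy : y ∈ Icc (0:ℝ) 1)
    (hf : IntegrableOn f (Icc (0:ℝ) 1)) (hg : IntegrableOn g (Icc (0:ℝ) 1))
    (hF : ∀ s ∈ Icc (0:ℝ) 1, F s = F y + ∫ t in y..s, f t)
    (hG : ∀ s ∈ Icc (0:ℝ) 1, G s = G y + ∫ t in y..s, g t)
    (hzero : ∀ s ∈ Icc (0:ℝ) 1, f s * G s + F s * g s = 0) :
    ∀ x ∈ Icc (0:ℝ) 1, F x * G x = F y * G y := by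
  have key : ∀ a ∈ Icc (0:ℝ) 1, ∀ b ∈ Icc (0:ℝ) 1, a ≤ b → F b * G b = F a * G a := by
    intro a ha b hb hab
    have h := ibp_le ha hb hab hf hg (re_anchor hy ha hf hF) (re_anchor hy ha hg hG)
    have hz : (∫ s in a..b, (f s * G s + F s * g s)) = 0 := by
      rw [intervalIntegral.integral_congr (g := fun _ => (0:Mat)) ?_]
      · simp
      · intro s hs
        rw [uIcc_of_le hab] at hs
        exact hzero s ⟨le_trans ha.1 hs.1, le_trans hs.2 hb.2⟩
    rw [hz] at h
    rw [← sub_eq_zero]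
    exact h
  intro x hx
  rcases le_total y x with h | h
  · exact key y hy x hx h
  · exact (key x hx y hy h).symm
private lemma key_alg (p q : Mat) (hp : p.det = 1) (hq : q.det = 1) :
    ((p * adjugate q - (adjugate p)ᵀ * qᵀ).mulVec ![1, 0] 0) ^ 2 +
    ((p * adjugate q - (adjugate p)ᵀ * qᵀ).mulVec ![1, 0] 1) ^ 2 =
    ((pᵀ * p) 0 0) * ((qᵀ * q) 1 1) + ((pᵀ * p) 1 1) * ((qᵀ * q) 0 0)
      - ((pᵀ * p) 0 1) * ((qᵀ * q) 1 0) - ((pᵀ * p) 1 0) * ((qᵀ * q) 0 1) - 2 := by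
  rw [Matrix.det_fin_two] at hp hq
  simp only [Matrix.mulVec, Matrix.adjugate_fin_two, Matrix.mul_apply, Matrix.sub_apply,
    Matrix.transpose_apply, Fin.sum_univ_two, dotProduct, Matrix.cons_val',
    Matrix.cons_val_zero, Matrix.cons_val_one, Matrix.head_cons, Matrix.head_fin_const,
    Matrix.empty_val', Matrix.cons_val_fin_one, Matrix.of_apply]
  ring_nf
  linear_combination (-2 - 2*(q 0 0 * q 1 1 - q 0 1 * q 1 0 - 1)) * hp + (-2 : ℝ) * hq
private lemma lm_eq_form {M mfn : ℝ → Mat} {y : ℝ} (hy : y ∈ Icc (0:ℝ) 1)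
    (hm : IntegrableOn mfn (Icc (0:ℝ) 1)) (L : Mat →ₗ[ℝ] Mat)
    (hM : ∀ x ∈ Icc (0:ℝ) 1, M x = 1 + ∫ s in y..x, mfn s) :
    ∀ x ∈ Icc (0:ℝ) 1, L (M x) = L (M y) + ∫ s in y..x, L (mfn s) := by
  intro x hx
  have hMy : M y = 1 := by simpa using hM y hy
  rw [hM x hx, hMy, map_add]
  congr 1
  exact (lin_ii L (ii_mem hm hy hx)).symm

set_option maxHeartbeats 1000000 in
/-- Let `V : [0,1] → M₂(ℝ)` be integrable, symmetric, trace-zero, let `N` solve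
`N' = VN`, `N(0) = I`, `H = NᵀN`, and let `U₊, U₋` solve `∂ₓU± = ±V U±`,
`U±(y,y) = I` (all ODEs expressed via integral equations). Then
`det(∫₀¹ H) - 1 = (1/2)∫₀¹∫₀¹ ‖(U₊(x,y) - U₋(x,y))e₁‖² dx dy`, the Euclidean
norm squared written as the sum of squares of coordinates. -/
theorem stmt_10 (V N : ℝ → Matrix (Fin 2) (Fin 2) ℝ)
    (Up Um : ℝ → ℝ → Matrix (Fin 2) (Fin 2) ℝ)
    (hV : @IntegrableOn _ _ _ _ SeminormedAddGroup.toContinuousENorm V (Set.Icc (0 : ℝ) 1) volume)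
    (hVsymm : ∀ x ∈ Set.Icc (0 : ℝ) 1, (V x)ᵀ = V x)
    (hVtr : ∀ x ∈ Set.Icc (0 : ℝ) 1, (V x).trace = 0)
    (hN : ∀ x ∈ Set.Icc (0 : ℝ) 1, N x = 1 + ∫ s in (0 : ℝ)..x, V s * N s)
    (hUp : ∀ y ∈ Set.Icc (0 : ℝ) 1, ∀ x ∈ Set.Icc (0 : ℝ) 1,
      Up x y = 1 + ∫ s in y..x, V s * Up s y)
    (hUm : ∀ y ∈ Set.Icc (0 : ℝ) 1, ∀ x ∈ Set.Icc (0 : ℝ) 1,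
      Um x y = 1 + ∫ s in y..x, -(V s * Um s y)) :
    (∫ ξ in (0 : ℝ)..1, (N ξ)ᵀ * N ξ).det - 1 =
      (1 / 2) * ∫ x in (0 : ℝ)..1, ∫ y in (0 : ℝ)..1,
        (((Up x y - Um x y).mulVec ![1, 0] 0) ^ 2 +
         ((Up x y - Um x y).mulVec ![1, 0] 1) ^ 2) := by
  have h0m : (0:ℝ) ∈ Icc (0:ℝ) 1 := ⟨le_rfl, zero_le_one⟩
  have hN0 : N 0 = 1 := by simpa using hN 0 h0m
  have hUpyy : ∀ y ∈ Icc (0:ℝ) 1, Up y y = 1 := fun y hy => by simpa using hUp y hy y hy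
  have hUmyy : ∀ y ∈ Icc (0:ℝ) 1, Um y y = 1 := fun y hy => by simpa using hUm y hy y hy
  have hUm' : ∀ y ∈ Icc (0:ℝ) 1, ∀ x ∈ Icc (0:ℝ) 1,
      Um x y = 1 + ∫ s in y..x, (-V s) * Um s y := by
    intro y hy x hx
    simpa only [neg_mul] using hUm y hy x hx
  obtain ⟨hfN, hNcont⟩ := reg h0m hV hN
  have hregUp : ∀ y ∈ Icc (0:ℝ) 1,
      IntegrableOn (fun s => V s * Up s y) (Icc (0:ℝ) 1) volume ∧
      ContinuousOn (fun x => Up x y) (Icc (0:ℝ) 1) := fun y hy => reg hy hV (hUp y hy)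
  have hregUm : ∀ y ∈ Icc (0:ℝ) 1,
      IntegrableOn (fun s => (-V s) * Um s y) (Icc (0:ℝ) 1) volume ∧
      ContinuousOn (fun x => Um x y) (Icc (0:ℝ) 1) := fun y hy => reg hy hV.neg (hUm' y hy)
  have hFN : ∀ s ∈ Icc (0:ℝ) 1, N s = N 0 + ∫ t in (0:ℝ)..s, V t * N t := by
    intro s hs; rw [hN s hs, hN0]
  -- (I) N x * adjugate (N x) = 1, det N = 1
  have hzero1 : ∀ s ∈ Icc (0:ℝ) 1,
      (V s * N s) * adjugate (N s) + N s * adjLM (V s * N s) = 0 := by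
    intro s hs
    have h1 : V s * N s * adjugate (N s) = (N s).det • V s := by
      rw [mul_assoc, Matrix.mul_adjugate, mul_smul_comm, mul_one]
    have h2 : N s * (adjugate (N s) * adjugate (V s)) = (N s).det • adjugate (V s) := by
      rw [← mul_assoc, Matrix.mul_adjugate, smul_mul_assoc, one_mul]
    rw [adjLM_apply, Matrix.adjugate_mul_distrib, h1, h2, ← smul_add]
    have h3 := self_add_adjugate (V s)
    rw [hVtr s hs, zero_smul] at h3
    rw [h3, smul_zero]
  have hNadj : ∀ x ∈ Icc (0:ℝ) 1, N x * adjugate (N x) = 1 := by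
    have hGadj : ∀ s ∈ Icc (0:ℝ) 1,
        adjugate (N s) = adjugate (N 0) + ∫ t in (0:ℝ)..s, adjLM (V t * N t) := by
      intro s hs
      have := lm_eq_form h0m hfN adjLM hN s hs
      rwa [adjLM_apply (N s), adjLM_apply (N 0)] at this
    have := ibp_const h0m hfN (lin_integrableOn adjLM hfN) hFN hGadj hzero1
    intro x hx
    have h := this x hx
    rwa [hN0, Matrix.adjugate_one, one_mul] at h
  have detN : ∀ x ∈ Icc (0:ℝ) 1, (N x).det = 1 := by
    intro x hx
    have h := (Matrix.mul_adjugate (N x)).symm.trans (hNadj x hx)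
    have h00 := congrFun (congrFun h 0) 0
    simpa [Matrix.smul_apply, Matrix.one_apply] using h00
  -- (II) (Um x 0)ᵀ * N x = 1
  have hFUm0 : ∀ s ∈ Icc (0:ℝ) 1,
      (Um s 0)ᵀ = (Um 0 0)ᵀ + ∫ t in (0:ℝ)..s, ((-V t) * Um t 0)ᵀ := by
    intro s hs
    have := lm_eq_form h0m (hregUm 0 h0m).1 transLM (hUm' 0 h0m) s hs
    exact this
  have hB : ∀ x ∈ Icc (0:ℝ) 1, (Um x 0)ᵀ * N x = 1 := by
    have hz : ∀ s ∈ Icc (0:ℝ) 1,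
        ((-V s) * Um s 0)ᵀ * N s + (Um s 0)ᵀ * (V s * N s) = 0 := by
      intro s hs
      rw [Matrix.transpose_mul, Matrix.transpose_neg, hVsymm s hs, mul_neg, neg_mul, mul_assoc,
        neg_add_cancel]
    have := ibp_const h0m (lin_integrableOn transLM (hregUm 0 h0m).1) hfN hFUm0 hFN hz
    intro x hx
    have h := this x hx
    rwa [hUmyy 0 h0m, Matrix.transpose_one, hN0, one_mul] at h
  -- K1 : Up x y = N x * adjugate (N y)
  have K1 : ∀ y ∈ Icc (0:ℝ) 1, ∀ x ∈ Icc (0:ℝ) 1, Up x y = N x * adjugate (N y) := by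
    intro y hy
    -- (III)
    have hGUp : ∀ s ∈ Icc (0:ℝ) 1, Up s y = Up y y + ∫ t in y..s, V t * Up t y := by
      intro s hs; rw [hUp y hy s hs, hUpyy y hy]
    have hz : ∀ s ∈ Icc (0:ℝ) 1,
        ((-V s) * Um s 0)ᵀ * Up s y + (Um s 0)ᵀ * (V s * Up s y) = 0 := by
      intro s hs
      rw [Matrix.transpose_mul, Matrix.transpose_neg, hVsymm s hs, mul_neg, neg_mul, mul_assoc,
        neg_add_cancel]
    have hC := ibp_const hy (lin_integrableOn transLM (hregUm 0 h0m).1) (hregUp y hy).1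
      (re_anchor h0m hy (lin_integrableOn transLM (hregUm 0 h0m).1) hFUm0) hGUp hz
    intro x hx
    have h := hC x hx
    rw [hUpyy y hy, mul_one] at h
    -- h : (Um x 0)ᵀ * Up x y = (Um y 0)ᵀ
    have hUmT : ∀ z ∈ Icc (0:ℝ) 1, (Um z 0)ᵀ = adjugate (N z) := by
      intro z hz'
      calc (Um z 0)ᵀ = (Um z 0)ᵀ * 1 := (mul_one _).symm
        _ = (Um z 0)ᵀ * (N z * adjugate (N z)) := by rw [hNadj z hz']
        _ = ((Um z 0)ᵀ * N z) * adjugate (N z) := by rw [mul_assoc]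
        _ = adjugate (N z) := by rw [hB z hz', one_mul]
    rw [hUmT x hx, hUmT y hy] at h
    calc Up x y = 1 * Up x y := (one_mul _).symm
      _ = (N x * adjugate (N x)) * Up x y := by rw [hNadj x hx]
      _ = N x * (adjugate (N x) * Up x y) := by rw [mul_assoc]
      _ = N x * adjugate (N y) := by rw [h]
  have hUp0 : ∀ x ∈ Icc (0:ℝ) 1, Up x 0 = N x := by
    intro x hx
    rw [K1 0 h0m x hx, hN0, Matrix.adjugate_one, mul_one]
  -- K2 : Um x y = (adjugate (N x))ᵀ * (N y)ᵀ
  have K2 : ∀ y ∈ Icc (0:ℝ) 1, ∀ x ∈ Icc (0:ℝ) 1,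
      Um x y = (adjugate (N x))ᵀ * (N y)ᵀ := by
    intro y hy
    have hFUp0 : ∀ s ∈ Icc (0:ℝ) 1,
        (Up s 0)ᵀ = (Up 0 0)ᵀ + ∫ t in (0:ℝ)..s, (V t * Up t 0)ᵀ := by
      intro s hs
      exact lm_eq_form h0m (hregUp 0 h0m).1 transLM (hUp 0 h0m) s hs
    have hGUm : ∀ s ∈ Icc (0:ℝ) 1, Um s y = Um y y + ∫ t in y..s, (-V t) * Um t y := by
      intro s hs; rw [hUm' y hy s hs, hUmyy y hy]
    have hz : ∀ s ∈ Icc (0:ℝ) 1,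
        (V s * Up s 0)ᵀ * Um s y + (Up s 0)ᵀ * ((-V s) * Um s y) = 0 := by
      intro s hs
      rw [Matrix.transpose_mul, hVsymm s hs, neg_mul, mul_neg, mul_assoc, add_neg_cancel]
    have hD := ibp_const hy (lin_integrableOn transLM (hregUp 0 h0m).1) (hregUm y hy).1
      (re_anchor h0m hy (lin_integrableOn transLM (hregUp 0 h0m).1) hFUp0) hGUm hz
    intro x hx
    have h := hD x hx
    rw [hUmyy y hy, mul_one, hUp0 x hx, hUp0 y hy] at h
    -- h : (N x)ᵀ * Um x y = (N y)ᵀ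
    have hinv : (adjugate (N x))ᵀ * (N x)ᵀ = 1 := by
      rw [← Matrix.transpose_mul, hNadj x hx, Matrix.transpose_one]
    calc Um x y = 1 * Um x y := (one_mul _).symm
      _ = ((adjugate (N x))ᵀ * (N x)ᵀ) * Um x y := by rw [hinv]
      _ = (adjugate (N x))ᵀ * ((N x)ᵀ * Um x y) := by rw [mul_assoc]
      _ = (adjugate (N x))ᵀ * (N y)ᵀ := by rw [h]
  -- final assembly
  have hNTcont : ContinuousOn (fun ξ => (N ξ)ᵀ) (Icc (0:ℝ) 1) :=
    (LinearMap.toContinuousLinearMap transLM).continuous.comp_continuousOn hNcont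
  have contH : ContinuousOn (fun ξ => (N ξ)ᵀ * N ξ) (Icc (0:ℝ) 1) :=
    (Continuous.matrix_mul (continuous_fst (Y := Mat)) continuous_snd).comp_continuousOn
      (hNTcont.prodMk hNcont)
  have II_H : IntervalIntegrable (fun ξ => (N ξ)ᵀ * N ξ) volume 0 1 := by
    apply ContinuousOn.intervalIntegrable
    rwa [uIcc_of_le zero_le_one]
  have hHent : ∀ i j : Fin 2, IntervalIntegrable (fun ξ => ((N ξ)ᵀ * N ξ) i j) volume 0 1 := by
    intro i j
    apply ContinuousOn.intervalIntegrable
    rw [uIcc_of_le zero_le_one]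
    exact ((continuous_apply j).comp (continuous_apply i)).comp_continuousOn contH
  have Jent : ∀ i j : Fin 2,
      (∫ ξ in (0:ℝ)..1, (N ξ)ᵀ * N ξ) i j = ∫ ξ in (0:ℝ)..1, ((N ξ)ᵀ * N ξ) i j := by
    intro i j
    have := lin_ii (entryLM i j) II_H
    simpa using this.symm
  set I00 : ℝ := ∫ ξ in (0:ℝ)..1, ((N ξ)ᵀ * N ξ) 0 0 with hI00
  set I01 : ℝ := ∫ ξ in (0:ℝ)..1, ((N ξ)ᵀ * N ξ) 0 1 with hI01
  set I10 : ℝ := ∫ ξ in (0:ℝ)..1, ((N ξ)ᵀ * N ξ) 1 0 with hI10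
  set I11 : ℝ := ∫ ξ in (0:ℝ)..1, ((N ξ)ᵀ * N ξ) 1 1 with hI11
  have hinner : ∀ x ∈ Icc (0:ℝ) 1,
      (∫ y in (0:ℝ)..1, (((Up x y - Um x y).mulVec ![1, 0] 0) ^ 2 +
        ((Up x y - Um x y).mulVec ![1, 0] 1) ^ 2))
      = ((N x)ᵀ * N x) 0 0 * I11 + ((N x)ᵀ * N x) 1 1 * I00
        - ((N x)ᵀ * N x) 0 1 * I10 - ((N x)ᵀ * N x) 1 0 * I01 - 2 := by
    intro x hx
    have h1 : (∫ y in (0:ℝ)..1, (((Up x y - Um x y).mulVec ![1, 0] 0) ^ 2 +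
        ((Up x y - Um x y).mulVec ![1, 0] 1) ^ 2))
        = ∫ y in (0:ℝ)..1,
            (((N x)ᵀ * N x) 0 0 * ((N y)ᵀ * N y) 1 1 + ((N x)ᵀ * N x) 1 1 * ((N y)ᵀ * N y) 0 0
              - ((N x)ᵀ * N x) 0 1 * ((N y)ᵀ * N y) 1 0
              - ((N x)ᵀ * N x) 1 0 * ((N y)ᵀ * N y) 0 1 - 2) := by
      apply intervalIntegral.integral_congr
      intro y hy
      rw [uIcc_of_le zero_le_one] at hy
      simp only
      rw [K1 y hy x hx, K2 y hy x hx]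
      have := key_alg (N x) (N y) (detN x hx) (detN y hy)
      rw [this]
    rw [h1]
    have i1 : IntervalIntegrable (fun y => ((N x)ᵀ * N x) 0 0 * ((N y)ᵀ * N y) 1 1) volume 0 1 :=
      (hHent 1 1).const_mul _
    have i2 : IntervalIntegrable (fun y => ((N x)ᵀ * N x) 1 1 * ((N y)ᵀ * N y) 0 0) volume 0 1 :=
      (hHent 0 0).const_mul _
    have i3 : IntervalIntegrable (fun y => ((N x)ᵀ * N x) 0 1 * ((N y)ᵀ * N y) 1 0) volume 0 1 :=
      (hHent 1 0).const_mul _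
    have i4 : IntervalIntegrable (fun y => ((N x)ᵀ * N x) 1 0 * ((N y)ᵀ * N y) 0 1) volume 0 1 :=
      (hHent 0 1).const_mul _
    rw [intervalIntegral.integral_sub (((i1.add i2).sub i3).sub i4) intervalIntegrable_const,
      intervalIntegral.integral_sub ((i1.add i2).sub i3) i4,
      intervalIntegral.integral_sub (i1.add i2) i3,
      intervalIntegral.integral_add i1 i2,
      intervalIntegral.integral_const_mul, intervalIntegral.integral_const_mul,
      intervalIntegral.integral_const_mul, intervalIntegral.integral_const_mul,
      intervalIntegral.integral_const]
    simp
    rfl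
  have houter : (∫ x in (0:ℝ)..1, ∫ y in (0:ℝ)..1,
      (((Up x y - Um x y).mulVec ![1, 0] 0) ^ 2 + ((Up x y - Um x y).mulVec ![1, 0] 1) ^ 2))
      = I00 * I11 + I11 * I00 - I01 * I10 - I10 * I01 - 2 := by
    have h2 : (∫ x in (0:ℝ)..1, ∫ y in (0:ℝ)..1,
        (((Up x y - Um x y).mulVec ![1, 0] 0) ^ 2 + ((Up x y - Um x y).mulVec ![1, 0] 1) ^ 2))
        = ∫ x in (0:ℝ)..1, (((N x)ᵀ * N x) 0 0 * I11 + ((N x)ᵀ * N x) 1 1 * I00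
          - ((N x)ᵀ * N x) 0 1 * I10 - ((N x)ᵀ * N x) 1 0 * I01 - 2) := by
      apply intervalIntegral.integral_congr
      intro x hx
      rw [uIcc_of_le zero_le_one] at hx
      exact hinner x hx
    rw [h2]
    have j1 : IntervalIntegrable (fun x => ((N x)ᵀ * N x) 0 0 * I11) volume 0 1 :=
      (hHent 0 0).mul_const _
    have j2 : IntervalIntegrable (fun x => ((N x)ᵀ * N x) 1 1 * I00) volume 0 1 :=
      (hHent 1 1).mul_const _
    have j3 : IntervalIntegrable (fun x => ((N x)ᵀ * N x) 0 1 * I10) volume 0 1 :=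
      (hHent 0 1).mul_const _
    have j4 : IntervalIntegrable (fun x => ((N x)ᵀ * N x) 1 0 * I01) volume 0 1 :=
      (hHent 1 0).mul_const _
    rw [intervalIntegral.integral_sub (((j1.add j2).sub j3).sub j4) intervalIntegrable_const,
      intervalIntegral.integral_sub ((j1.add j2).sub j3) j4,
      intervalIntegral.integral_sub (j1.add j2) j3,
      intervalIntegral.integral_add j1 j2,
      intervalIntegral.integral_mul_const, intervalIntegral.integral_mul_const,
      intervalIntegral.integral_mul_const, intervalIntegral.integral_mul_const,
      intervalIntegral.integral_const]
    simp
    rfl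
  rw [houter, Matrix.det_fin_two, Jent 0 0, Jent 1 1, Jent 0 1, Jent 1 0]
  rw [← hI00, ← hI01, ← hI10, ← hI11]
  ring
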